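/- Let K be an algebraically closed field, l > 1, q a primitive l-th root of unity, and ζ = (0,0). Then the fiber algebra D_{q,ζ} = K⟨x,∂⟩/(∂x - q x ∂ - (q-1), xˡ, ∂ˡ) has the l-dimensional module K[x]/(xˡ), with x acting by multiplication and ∂ acting as the q-derivative sending xⁿ to (qⁿ-1)xⁿ⁻¹; this module is irreducible. -/

import Mathlib

/-- The defining relations of the fiber `D_{q,ζ}` of the `q`-Weyl algebra over the point
`ζ = (a, ω)` of the spectrum of its `l`-center: `∂x = q x∂ + (q-1)`, `xˡ = a`, `∂ˡ = ω`. -/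
inductive qWeylFiberRel (K : Type) [CommRing K] (q a ω : K) (l : ℕ) :
    FreeAlgebra K (Fin 2) → FreeAlgebra K (Fin 2) → Prop
  | weyl : qWeylFiberRel K q a ω l (FreeAlgebra.ι K 1 * FreeAlgebra.ι K 0)
      (q • (FreeAlgebra.ι K 0 * FreeAlgebra.ι K 1) + (q - 1) • (1 : FreeAlgebra K (Fin 2)))
  | xl : qWeylFiberRel K q a ω l ((FreeAlgebra.ι K (0 : Fin 2)) ^ l)
      (algebraMap K (FreeAlgebra K (Fin 2)) a)
  | dl : qWeylFiberRel K q a ω l ((FreeAlgebra.ι K (1 : Fin 2)) ^ l)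
      (algebraMap K (FreeAlgebra K (Fin 2)) ω)

/-- The fiber algebra `D_{q,ζ} = K⟨x,∂⟩/(∂x - q x ∂ - (q-1), xˡ - a, ∂ˡ - ω)`. -/
abbrev qWeylFiber (K : Type) [CommRing K] (q a ω : K) (l : ℕ) : Type :=
  RingQuot (qWeylFiberRel K q a ω l)

section aux
variable {K : Type} [Field K]

def Xop (K : Type) [Field K] (l : ℕ) : Module.End K (Fin l → K) where
  toFun v i := if (i : ℕ) = 0 then 0 else v ⟨(i : ℕ) - 1, lt_of_le_of_lt (Nat.sub_le _ _) i.isLt⟩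
  map_add' v w := by funext i; by_cases h : (i : ℕ) = 0 <;> simp [h]
  map_smul' c v := by funext i; by_cases h : (i : ℕ) = 0 <;> simp [h]

def Dop (K : Type) [Field K] (l : ℕ) (q : K) : Module.End K (Fin l → K) where
  toFun v i := if h : (i : ℕ) + 1 < l then (q ^ ((i : ℕ) + 1) - 1) * v ⟨(i : ℕ) + 1, h⟩ else 0
  map_add' v w := by funext i; by_cases h : (i : ℕ) + 1 < l <;> simp [h]; ring
  map_smul' c v := by funext i; by_cases h : (i : ℕ) + 1 < l <;> simp [h]; ring

@[simp] lemma Xop_apply (l : ℕ) (v : Fin l → K) (i : Fin l) :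
    Xop K l v i = if (i : ℕ) = 0 then 0
      else v ⟨(i : ℕ) - 1, lt_of_le_of_lt (Nat.sub_le _ _) i.isLt⟩ := rfl

@[simp] lemma Dop_apply (l : ℕ) (q : K) (v : Fin l → K) (i : Fin l) :
    Dop K l q v i = if h : (i : ℕ) + 1 < l then (q ^ ((i : ℕ) + 1) - 1) * v ⟨(i : ℕ) + 1, h⟩
      else 0 := rfl

lemma vc {M : Type} {l : ℕ} (v : Fin l → M) {m m' : ℕ} (hm : m < l) (hm' : m' < l)
    (h : m = m') : v ⟨m, hm⟩ = v ⟨m', hm'⟩ := by subst h; rfl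

lemma weyl_rel (l : ℕ) (q : K) (hql : q ^ l = 1) :
    Dop K l q * Xop K l = q • (Xop K l * Dop K l q) + (q - 1) • 1 := by
  refine LinearMap.ext fun v => funext fun i => ?_
  simp only [Module.End.mul_apply, Xop_apply, Dop_apply, LinearMap.add_apply,
    LinearMap.smul_apply, Module.End.one_apply, Pi.add_apply, Pi.smul_apply, smul_eq_mul]
  by_cases h : (i : ℕ) + 1 < l
  · rw [dif_pos h]
    rw [if_neg (Nat.succ_ne_zero _), vc v _ i.isLt (by omega : (i:ℕ) + 1 - 1 = (i:ℕ))]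
    simp only [Fin.eta]
    by_cases h0 : (i : ℕ) = 0
    · rw [if_pos h0]
      have hp : q ^ ((i:ℕ) + 1) = q := by rw [h0, pow_one]
      rw [hp]
      ring
    · have e : (i : ℕ) - 1 + 1 = (i : ℕ) := by omega
      have h1 : (i : ℕ) - 1 + 1 < l := by omega
      rw [if_neg h0, dif_pos h1]
      simp only [Fin.val_mk, e, Fin.eta]
      ring
  · have hi : (i : ℕ) + 1 = l := by omega
    have hq1 : q ^ ((i : ℕ) + 1) = 1 := by rw [hi, hql]
    rw [dif_neg h]
    by_cases h0 : (i : ℕ) = 0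
    · rw [if_pos h0]
      have : q = 1 := by rw [h0] at hq1; simpa using hq1
      rw [this]; ring
    · have e : (i : ℕ) - 1 + 1 = (i : ℕ) := by omega
      have h1 : (i : ℕ) - 1 + 1 < l := by omega
      rw [if_neg h0, dif_pos h1]
      simp only [Fin.val_mk, e, Fin.eta]
      linear_combination (-(v i)) * hq1

lemma Xpow_apply (l : ℕ) (k : ℕ) (v : Fin l → K) (i : Fin l) :
    ((Xop K l) ^ k) v i = if h : k ≤ (i : ℕ) then v ⟨(i : ℕ) - k, by omega⟩ else 0 := by
  induction k generalizing v i with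
  | zero => simp
  | succ k ih =>
    rw [pow_succ, Module.End.mul_apply, ih]
    by_cases h : k + 1 ≤ (i : ℕ)
    · have h' : k ≤ (i : ℕ) := by omega
      simp only [dif_pos h', dif_pos h, Xop_apply]
      rw [if_neg (by omega : ¬ (i : ℕ) - k = 0)]
      exact vc v _ _ (by omega)
    · by_cases h' : k ≤ (i : ℕ)
      · have : (i : ℕ) - k = 0 := by omega
        simp [dif_pos h', dif_neg h, this]
        exact fun h'' => absurd h'' (by omega)
      · simp [dif_neg h', dif_neg h]
        exact fun h'' => absurd h'' (by omega)

lemma Dpow_apply (l : ℕ) (q : K) (k : ℕ) (v : Fin l → K) (i : Fin l) :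
    ((Dop K l q) ^ k) v i = if h : (i : ℕ) + k < l then
      (∏ j ∈ Finset.range k, (q ^ ((i : ℕ) + 1 + j) - 1)) * v ⟨(i : ℕ) + k, h⟩ else 0 := by
  induction k generalizing v i with
  | zero => simp [i.isLt]
  | succ k ih =>
    rw [pow_succ', Module.End.mul_apply]
    simp only [Dop_apply]
    by_cases h1 : (i : ℕ) + 1 < l
    · rw [dif_pos h1, ih]
      by_cases h2 : (i : ℕ) + (k + 1) < l
      · have h3 : ((⟨(i:ℕ)+1, h1⟩ : Fin l) : ℕ) + k < l := by simp; omega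
        rw [dif_pos h3, dif_pos h2, Finset.prod_range_succ']
        have : ∀ m (hm : m < l) m' (hm' : m' < l), m = m' →
            v ⟨m, hm⟩ = v ⟨m', hm'⟩ := by rintro m hm m' hm' rfl; rfl
        rw [this _ _ _ h2 (by simp; omega)]
        simp only [Fin.val_mk]
        have hp : ∀ a ∈ Finset.range k, q ^ ((i:ℕ) + 1 + 1 + a) - 1 = q ^ ((i:ℕ)+1+(a+1)) - 1 := by
          intro a _; ring_nf
        rw [Finset.prod_congr rfl hp]
        ring
      · have h3 : ¬ (((⟨(i:ℕ)+1, h1⟩ : Fin l) : ℕ) + k < l) := by simp; omega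
        rw [dif_neg h3, dif_neg h2, mul_zero]
    · rw [dif_neg h1, dif_neg (by omega)]

lemma Xop_pow_l (l : ℕ) : (Xop K l) ^ l = 0 := by
  refine LinearMap.ext fun v => funext fun i => ?_
  rw [Xpow_apply, dif_neg (by omega : ¬ l ≤ (i : ℕ))]
  rfl

lemma Dop_pow_l (l : ℕ) (q : K) : (Dop K l q) ^ l = 0 := by
  refine LinearMap.ext fun v => funext fun i => ?_
  rw [Dpow_apply, dif_neg (by omega : ¬ (i : ℕ) + l < l)]
  rfl


end aux

/-- The fiber algebra `D_{q,(0,0)} = K⟨x,∂⟩/(∂x - q x∂ - (q-1), xˡ, ∂ˡ)` has an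
`l`-dimensional module `K[x]/(xˡ)` (modelled as `Fin l → K` via the basis `1,x,…,x^{l-1}`),
with `x` acting by multiplication and `∂` acting as the `q`-derivative `xⁿ ↦ (qⁿ-1)xⁿ⁻¹`;
this module is irreducible. -/

theorem stmt10 (K : Type) [Field K] [IsAlgClosed K] [CharZero K]
    (l : ℕ) (hl : 1 < l) (q : K) (hq : IsPrimitiveRoot q l) :
    ∃ ρ : qWeylFiber K q 0 0 l →ₐ[K] Module.End K (Fin l → K),
      (∀ (v : Fin l → K) (i : Fin l),
        ρ (RingQuot.mkAlgHom K (qWeylFiberRel K q 0 0 l) (FreeAlgebra.ι K 0)) v i =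
          if (i : ℕ) = 0 then 0 else v ⟨(i : ℕ) - 1, lt_of_le_of_lt (Nat.sub_le _ _) i.isLt⟩) ∧
      (∀ (v : Fin l → K) (i : Fin l),
        ρ (RingQuot.mkAlgHom K (qWeylFiberRel K q 0 0 l) (FreeAlgebra.ι K 1)) v i =
          if h : (i : ℕ) + 1 < l then (q ^ ((i : ℕ) + 1) - 1) * v ⟨(i : ℕ) + 1, h⟩ else 0) ∧
      (∀ W : Submodule K (Fin l → K),
        (∀ (d : qWeylFiber K q 0 0 l) (w : Fin l → K), w ∈ W → ρ d w ∈ W) →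
        W = ⊥ ∨ W = ⊤) := by
  classical
  have hql : q ^ l = 1 := hq.pow_eq_one
  set f : Fin 2 → Module.End K (Fin l → K) := ![Xop K l, Dop K l q] with hf
  set F : FreeAlgebra K (Fin 2) →ₐ[K] Module.End K (Fin l → K) := FreeAlgebra.lift K f with hF
  have hF0 : F (FreeAlgebra.ι K 0) = Xop K l := by
    simp [hF, hf, FreeAlgebra.lift_ι_apply]
  have hF1 : F (FreeAlgebra.ι K 1) = Dop K l q := by
    simp [hF, hf, FreeAlgebra.lift_ι_apply]
  have hrel : ∀ ⦃a b : FreeAlgebra K (Fin 2)⦄, qWeylFiberRel K q 0 0 l a b → F a = F b := by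
    rintro a b (⟨⟩ | ⟨⟩ | ⟨⟩)
    · rw [map_mul, map_add, map_smul, map_smul, map_mul, map_one, hF0, hF1]
      exact weyl_rel l q hql
    · rw [map_pow, hF0, Xop_pow_l]; simp
    · rw [map_pow, hF1, Dop_pow_l]; simp
  refine ⟨RingQuot.liftAlgHom K ⟨F, hrel⟩, ?_, ?_, ?_⟩
  · intro v i
    rw [RingQuot.liftAlgHom_mkAlgHom_apply, hF0, Xop_apply]
  · intro v i
    rw [RingQuot.liftAlgHom_mkAlgHom_apply, hF1, Dop_apply]
  · intro W hW
    by_cases hWbot : W = ⊥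
    · exact Or.inl hWbot
    right
    obtain ⟨w, hwW, hw0⟩ := (Submodule.ne_bot_iff W).1 hWbot
    -- maximal index with nonzero coefficient
    set S : Finset (Fin l) := Finset.univ.filter (fun i => w i ≠ 0) with hS
    have hSne : S.Nonempty := by
      by_contra hc
      apply hw0
      funext i
      by_contra hi
      exact hc ⟨i, by simp only [hS, Finset.mem_filter, Finset.mem_univ, true_and]; exact hi⟩
    obtain ⟨n, hnS, hmax0⟩ := S.exists_max_image id hSne
    have hwn : w n ≠ 0 := by simpa [hS] using hnS
    have hmax : ∀ i : Fin l, (n : ℕ) < (i : ℕ) → w i = 0 := by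
      intro i hi
      by_contra hcc
      have h1 := hmax0 i (by simp only [hS, Finset.mem_filter, Finset.mem_univ, true_and]; exact hcc)
      have h2 := Fin.le_def.1 h1
      simp only [id] at h2
      omega
    -- closure under the operators
    have hXmem : ∀ (k : ℕ) (u : Fin l → K), u ∈ W → ((Xop K l) ^ k) u ∈ W := by
      intro k u hu
      have := hW ((RingQuot.mkAlgHom K (qWeylFiberRel K q 0 0 l) (FreeAlgebra.ι K 0)) ^ k) u hu
      rwa [map_pow, RingQuot.liftAlgHom_mkAlgHom_apply, hF0] at this
    have hDmem : ∀ (k : ℕ) (u : Fin l → K), u ∈ W → ((Dop K l q) ^ k) u ∈ W := by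
      intro k u hu
      have := hW ((RingQuot.mkAlgHom K (qWeylFiberRel K q 0 0 l) (FreeAlgebra.ι K 1)) ^ k) u hu
      rwa [map_pow, RingQuot.liftAlgHom_mkAlgHom_apply, hF1] at this
    set i0 : Fin l := ⟨0, by omega⟩ with hi0
    set c : K := ∏ j ∈ Finset.range (n : ℕ), (q ^ (0 + 1 + j) - 1) with hc
    have hc0 : c ≠ 0 := by
      rw [hc]
      refine Finset.prod_ne_zero_iff.2 fun j hj => ?_
      rw [Finset.mem_range] at hj
      have : q ^ (0 + 1 + j) ≠ 1 :=
        hq.pow_ne_one_of_pos_of_lt (by omega) (by have := n.isLt; omega)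
      exact sub_ne_zero.2 this
    set e0 : Fin l → K := fun j => if (j : ℕ) = 0 then 1 else 0 with he0
    have hu : ((Dop K l q) ^ (n : ℕ)) w = (c * w n) • e0 := by
      funext i
      rw [Dpow_apply]
      by_cases hi : (i : ℕ) = 0
      · have hnl : (i : ℕ) + (n : ℕ) < l := by have := n.isLt; omega
        rw [dif_pos hnl]
        have : w ⟨(i : ℕ) + (n : ℕ), hnl⟩ = w n := vc w _ _ (by omega)
        rw [this]
        simp [he0, hi, hc]
      · have : ((c * w n) • e0) i = 0 := by simp [he0, hi]
        rw [this]
        by_cases hnl : (i : ℕ) + (n : ℕ) < l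
        · rw [dif_pos hnl]
          have : w ⟨(i : ℕ) + (n : ℕ), hnl⟩ = 0 := hmax _ (by simp; omega)
          rw [this, mul_zero]
        · rw [dif_neg hnl]
    have he0W : e0 ∈ W := by
      have h1 : ((Dop K l q) ^ (n : ℕ)) w ∈ W := hDmem _ _ hwW
      rw [hu] at h1
      have h2 : (c * w n)⁻¹ • ((c * w n) • e0) ∈ W := Submodule.smul_mem _ _ h1
      rwa [smul_smul, inv_mul_cancel₀ (mul_ne_zero hc0 hwn), one_smul] at h2
    have hsingle : ∀ i : Fin l, (fun j => if i = j then (1:K) else 0) ∈ W := by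
      intro i
      have hmem : ((Xop K l) ^ (i : ℕ)) e0 ∈ W := hXmem _ _ he0W
      have : ((Xop K l) ^ (i : ℕ)) e0 = fun j => if i = j then (1:K) else 0 := by
        funext j
        rw [Xpow_apply]
        by_cases h1 : (i : ℕ) ≤ (j : ℕ)
        · rw [dif_pos h1]
          by_cases h2 : i = j
          · rw [if_pos h2]
            simp [he0]
            omega
          · rw [if_neg h2]
            have : (j : ℕ) - (i : ℕ) ≠ 0 := by
              have : (i : ℕ) ≠ (j : ℕ) := fun h => h2 (Fin.ext h)
              omega
            simp [he0, this]
        · rw [dif_neg h1, if_neg (fun h => h1 (le_of_eq (congrArg Fin.val h)))]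
      rwa [this] at hmem
    rw [eq_top_iff]
    intro v _
    rw [pi_eq_sum_univ v]
    exact Submodule.sum_mem _ fun i _ => Submodule.smul_mem _ _ (hsingle i)
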